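/- Let n be a positive integer. For all integers k₁, k₂, the following are equivalent: (i) n divides 2k₁ − 3k₂ and n divides −3k₁ + 6k₂; (ii) n divides k₁ and n / gcd(n, 3) divides k₂. -/

import Mathlib

/-- Type `G₂` computation: `n ∣ 2k₁ − 3k₂` and `n ∣ −3k₁ + 6k₂` iff `n ∣ k₁` and
`n / gcd(n, 3) ∣ k₂`. -/
theorem stmt_11 (n : ℕ) (hn : 0 < n) (k₁ k₂ : ℤ) :
    ((n : ℤ) ∣ 2 * k₁ - 3 * k₂ ∧ (n : ℤ) ∣ -3 * k₁ + 6 * k₂) ↔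
      ((n : ℤ) ∣ k₁ ∧ ((n / Nat.gcd n 3 : ℕ) : ℤ) ∣ k₂) := by
  have key : (n : ℤ) ∣ 3 * k₂ ↔ ((n / Nat.gcd n 3 : ℕ) : ℤ) ∣ k₂ := by
    by_cases h3 : (3 : ℕ) ∣ n
    · obtain ⟨m, rfl⟩ := h3
      have hg : Nat.gcd (3 * m) 3 = 3 := by
        rw [Nat.gcd_comm]
        exact Nat.gcd_eq_left ⟨m, rfl⟩
      rw [hg, Nat.mul_div_cancel_left m (by norm_num)]
      push_cast
      constructor
      · rintro ⟨c, hc⟩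
        exact ⟨c, by linarith⟩
      · rintro ⟨c, hc⟩
        exact ⟨c, by rw [hc]; ring⟩
    · have hg : Nat.gcd n 3 = 1 := by
        have := (Nat.Prime.coprime_iff_not_dvd (by norm_num)).mpr h3
        exact Nat.Coprime.gcd_eq_one (Nat.coprime_comm.mp this)
      rw [hg, Nat.div_one]
      have hcop : IsCoprime (n : ℤ) 3 := by
        rw [Int.isCoprime_iff_gcd_eq_one]
        simpa [Int.gcd] using hg
      constructor
      · intro h
        exact hcop.dvd_of_dvd_mul_left h
      · intro h
        exact h.mul_left 3
  constructor
  · rintro ⟨h1, h2⟩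
    have hk1 : (n : ℤ) ∣ k₁ := by
      have := dvd_add (h1.mul_left 2) h2
      rw [show k₁ = 2 * (2 * k₁ - 3 * k₂) + (-3 * k₁ + 6 * k₂) by ring]; exact this
    have hk2 : (n : ℤ) ∣ 3 * k₂ := by
      have := dvd_add (h1.mul_left 3) (h2.mul_left 2)
      rw [show 3 * k₂ = 3 * (2 * k₁ - 3 * k₂) + 2 * (-3 * k₁ + 6 * k₂) by ring]; exact this
    exact ⟨hk1, key.mp hk2⟩
  · rintro ⟨h1, h2⟩
    have hk2 : (n : ℤ) ∣ 3 * k₂ := key.mpr h2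
    constructor
    · exact dvd_sub (h1.mul_left 2) hk2
    · have := dvd_add (h1.mul_left (-3)) (hk2.mul_left 2)
      rw [show -3 * k₁ + 6 * k₂ = -3 * k₁ + 2 * (3 * k₂) by ring]; exact this
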